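/- For the d-dimensional identity channel, O_t(I_d) = (1/d²)(1 + √((td² − 1)(d² − 1))) for 1/d² ≤ t ≤ 1, attained at ρ* = (1−λ)I/d² + λ φ⁺ with λ = √((td²−1)/(d²−1)). -/

import Mathlib

open Matrix Complex Finset
open scoped ComplexOrder

lemma phi_normSq {d : ℕ} (hd : 0 < d) :
    ∑ α : Fin d × Fin d, Complex.normSq (if α.1 = α.2 then ((1 / Real.sqrt d : ℝ) : ℂ) else 0) = 1 := by
  rw [Fintype.sum_prod_type]
  simp only [apply_ite Complex.normSq, Complex.normSq_ofReal, map_zero,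
    Finset.sum_ite_eq, Finset.mem_univ, if_true, Finset.sum_const, Finset.card_univ,
    Fintype.card_fin, nsmul_eq_mul]
  rw [div_mul_div_comm, one_mul, Real.mul_self_sqrt (by positivity)]
  field_simp

lemma sqrtAlg {d : ℕ} (hd : 0 < d) (t : ℝ) (ht1 : 1/((d:ℝ)^2) ≤ t) :
    Real.sqrt (t - 1/((d:ℝ)^2)) * Real.sqrt (1 - 1/((d:ℝ)^2))
      = (1/((d:ℝ)^2)) * Real.sqrt ((t*(d:ℝ)^2-1)*((d:ℝ)^2-1)) := by
  set D := ((d:ℝ)^2) with hD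
  have hD0 : (0:ℝ) < D := by positivity
  have hD1 : (1:ℝ) ≤ D := by
    have : (1:ℝ) ≤ (d:ℝ) := by exact_mod_cast hd
    nlinarith
  have h1 : 0 ≤ t - 1/D := by linarith
  have h2 : 0 ≤ t*D - 1 := by
    rw [div_le_iff₀ hD0] at ht1; linarith
  rw [← Real.sqrt_mul h1]
  have e1 : t - 1/D = (t*D-1)/D := by field_simp
  have e2 : 1 - 1/D = (D-1)/D := by field_simp
  have h3 : (t - 1/D) * (1 - 1/D) = ((t*D-1)*(D-1)) * (1/D)^2 := by
    rw [e1, e2]; ring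
  rw [h3, Real.sqrt_mul (by nlinarith), Real.sqrt_sq (by positivity), mul_comm]


set_option maxHeartbeats 2000000 in
lemma ub {d : ℕ} (hd : 0 < d) (t : ℝ)
    (φ : Fin d × Fin d → ℂ) (hn : ∑ α : Fin d × Fin d, Complex.normSq (φ α) = 1)
    (ρ : Matrix (Fin d × Fin d) (Fin d × Fin d) ℂ)
    (hpsd : ρ.PosSemidef) (htr : ρ.trace = 1) (hpur : ((ρ * ρ).trace.re ≤ t)) :
    (star φ ⬝ᵥ ρ.mulVec φ).re ≤ 1/((d:ℝ)^2)
      + Real.sqrt (t - 1/((d:ℝ)^2)) * Real.sqrt (1 - 1/((d:ℝ)^2)) := by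
  classical
  set c : ℝ := 1/((d:ℝ)^2) with hc
  have hD0 : (0:ℝ) < (d:ℝ)^2 := by positivity
  have hcard : (Fintype.card (Fin d × Fin d) : ℝ) = (d:ℝ)^2 := by
    rw [Fintype.card_prod, Fintype.card_fin]; push_cast; ring
  have hcD : c * ((d:ℝ)^2) = 1 := by rw [hc]; field_simp
  set Δ : Fin d × Fin d → Fin d × Fin d → ℂ :=
    fun α β => ρ α β - if α = β then (c:ℂ) else 0 with hΔ
  set Q : Fin d × Fin d → Fin d × Fin d → ℂ :=
    fun α β => φ α * (starRingEnd ℂ) (φ β) - if α = β then (c:ℂ) else 0 with hQ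
  have hip : ∑ α : Fin d × Fin d, (starRingEnd ℂ) (φ α) * φ α = 1 := by
    have : ∀ α : Fin d × Fin d, (starRingEnd ℂ) (φ α) * φ α = ((Complex.normSq (φ α) : ℝ) : ℂ) := by
      intro α; rw [mul_comm, Complex.mul_conj]
    simp only [this, ← Complex.ofReal_sum, hn, Complex.ofReal_one]
  have hF : star φ ⬝ᵥ ρ.mulVec φ
      = ∑ α : Fin d × Fin d, ∑ β : Fin d × Fin d, (starRingEnd ℂ) (φ α) * ρ α β * φ β := by
    simp only [dotProduct, mulVec, Finset.mul_sum, Pi.star_apply, Complex.star_def]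
    exact Finset.sum_congr rfl fun α _ => Finset.sum_congr rfl fun β _ => by ring
  have htrace : ∑ α : Fin d × Fin d, ρ α α = 1 := htr
  -- pointwise expansion
  have point : ∀ α β : Fin d × Fin d, Δ α β * (starRingEnd ℂ) (Q α β)
      = (starRingEnd ℂ) (φ α) * ρ α β * φ β
        - (if α = β then (c:ℂ) * ρ α β else 0)
        - (if α = β then (c:ℂ) * ((starRingEnd ℂ) (φ α) * φ β) else 0)
        + (if α = β then ((c:ℂ) * c) else 0) := by
    intro α β
    simp only [hΔ, hQ, map_sub, _root_.map_mul, Complex.conj_conj, apply_ite (starRingEnd ℂ),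
      Complex.conj_ofReal, map_zero]
    split_ifs with h <;> ring
  have key : ∑ α : Fin d × Fin d, ∑ β : Fin d × Fin d, Δ α β * (starRingEnd ℂ) (Q α β)
      = (star φ ⬝ᵥ ρ.mulVec φ) - (c:ℂ) := by
    calc ∑ α : Fin d × Fin d, ∑ β : Fin d × Fin d, Δ α β * (starRingEnd ℂ) (Q α β)
        = ∑ α : Fin d × Fin d, ∑ β : Fin d × Fin d,
            ((starRingEnd ℂ) (φ α) * ρ α β * φ β
            - (if α = β then (c:ℂ) * ρ α β else 0)
            - (if α = β then (c:ℂ) * ((starRingEnd ℂ) (φ α) * φ β) else 0)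
            + (if α = β then ((c:ℂ) * c) else 0)) :=
          Finset.sum_congr rfl fun α _ => Finset.sum_congr rfl fun β _ => point α β
      _ = (∑ α : Fin d × Fin d, ∑ β : Fin d × Fin d, (starRingEnd ℂ) (φ α) * ρ α β * φ β)
            - (∑ α : Fin d × Fin d, (c:ℂ) * ρ α α)
            - (∑ α : Fin d × Fin d, (c:ℂ) * ((starRingEnd ℂ) (φ α) * φ α))
            + (∑ _α : Fin d × Fin d, ((c:ℂ) * c)) := by
          simp only [Finset.sum_add_distrib, Finset.sum_sub_distrib, Finset.sum_ite_eq,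
            Finset.mem_univ, if_true]
      _ = (star φ ⬝ᵥ ρ.mulVec φ) - (c:ℂ) := by
          rw [← hF, ← Finset.mul_sum, ← Finset.mul_sum, htrace, hip, Finset.sum_const,
            Finset.card_univ, nsmul_eq_mul]
          have h5 : ((Fintype.card (Fin d × Fin d)) : ℂ) * ((c:ℂ) * (c:ℂ)) = (c:ℂ) := by
            have h6 : ((Fintype.card (Fin d × Fin d)) : ℝ) * (c * c) = c := by
              rw [hcard]; nlinarith [hcD]
            calc ((Fintype.card (Fin d × Fin d)) : ℂ) * ((c:ℂ) * (c:ℂ))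
                = (((Fintype.card (Fin d × Fin d) : ℝ) * (c * c) : ℝ) : ℂ) := by push_cast; ring
              _ = (c:ℂ) := by rw [h6]
          rw [h5]; ring
  -- real part identity
  have hre : ∑ α : Fin d × Fin d, ∑ β : Fin d × Fin d, (Δ α β * (starRingEnd ℂ) (Q α β)).re
      = (star φ ⬝ᵥ ρ.mulVec φ).re - c := by
    have h := congrArg Complex.re key
    simpa only [Complex.re_sum, Complex.sub_re, Complex.ofReal_re] using h
  -- pointwise normSq expansions
  have pq : ∀ α β : Fin d × Fin d, Complex.normSq (Q α β)
      = Complex.normSq (φ α) * Complex.normSq (φ β) + (if α = β then c*c else 0)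
        - (if α = β then 2*(c * Complex.normSq (φ α)) else 0) := by
    intro α β
    by_cases h : α = β
    · subst h
      simp only [hQ, eq_self_iff_true, if_true]
      rw [Complex.normSq_sub, Complex.normSq_mul, Complex.normSq_conj, Complex.normSq_ofReal,
        Complex.conj_ofReal, Complex.mul_conj, ← Complex.ofReal_mul, Complex.ofReal_re]
      ring
    · simp [hQ, h, Complex.normSq_mul, Complex.normSq_conj]
  have pd : ∀ α β : Fin d × Fin d, Complex.normSq (Δ α β)
      = Complex.normSq (ρ α β) + (if α = β then c*c else 0)
        - (if α = β then 2*(c * (ρ α β).re) else 0) := by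
    intro α β
    by_cases h : α = β
    · subst h
      simp only [hΔ, eq_self_iff_true, if_true]
      rw [Complex.normSq_sub, Complex.normSq_ofReal, Complex.conj_ofReal]
      simp only [Complex.mul_re, Complex.ofReal_re, Complex.ofReal_im, mul_zero, sub_zero]
      ring
    · simp [hΔ, h]
  have hccsum : ∑ _α : Fin d × Fin d, (c*c) = c := by
    rw [Finset.sum_const, Finset.card_univ, nsmul_eq_mul, hcard]
    nlinarith [hcD]
  -- sum of normSq Q
  have hQsum : ∑ α : Fin d × Fin d, ∑ β : Fin d × Fin d, Complex.normSq (Q α β) = 1 - c := by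
    calc ∑ α : Fin d × Fin d, ∑ β : Fin d × Fin d, Complex.normSq (Q α β)
        = (∑ α : Fin d × Fin d, ∑ β : Fin d × Fin d, Complex.normSq (φ α) * Complex.normSq (φ β))
          + (∑ _α : Fin d × Fin d, (c*c))
          - (∑ α : Fin d × Fin d, 2*(c * Complex.normSq (φ α))) := by
          simp only [pq, Finset.sum_add_distrib, Finset.sum_sub_distrib, Finset.sum_ite_eq,
            Finset.mem_univ, if_true]
      _ = 1 - c := by
          rw [← Finset.sum_mul_sum, hn, hccsum, ← Finset.mul_sum, ← Finset.mul_sum, hn]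
          ring
  -- sum of normSq Δ
  have htr2 : ∑ α : Fin d × Fin d, ∑ β : Fin d × Fin d, Complex.normSq (ρ α β)
      = ((ρ * ρ).trace).re := by
    have e1 : (ρ * ρ).trace = ∑ α : Fin d × Fin d, ∑ β : Fin d × Fin d, ρ α β * ρ β α := by
      simp [Matrix.trace, Matrix.mul_apply, Matrix.diag]
    have e2 : ∀ α β : Fin d × Fin d, ρ α β * ρ β α = ((Complex.normSq (ρ α β) : ℝ) : ℂ) := by
      intro α β
      rw [← hpsd.1.apply β α]
      simp only [Complex.star_def]
      rw [Complex.mul_conj]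
    rw [e1]
    simp only [e2, ← Complex.ofReal_sum, Complex.ofReal_re]
  have hΔsum : ∑ α : Fin d × Fin d, ∑ β : Fin d × Fin d, Complex.normSq (Δ α β) ≤ t - c := by
    have htrre : ∑ α : Fin d × Fin d, (ρ α α).re = 1 := by
      have := congrArg Complex.re htr
      simpa only [Matrix.trace, Matrix.diag, Complex.re_sum, Complex.one_re] using this
    have : ∑ α : Fin d × Fin d, ∑ β : Fin d × Fin d, Complex.normSq (Δ α β)
        = (∑ α : Fin d × Fin d, ∑ β : Fin d × Fin d, Complex.normSq (ρ α β))
          + (∑ _α : Fin d × Fin d, (c*c))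
          - (∑ α : Fin d × Fin d, 2*(c * (ρ α α).re)) := by
        simp only [pd, Finset.sum_add_distrib, Finset.sum_sub_distrib, Finset.sum_ite_eq,
          Finset.mem_univ, if_true]
    rw [this, htr2, hccsum, ← Finset.mul_sum, ← Finset.mul_sum, htrre]
    have := hpur
    linarith
  -- Cauchy–Schwarz
  have hcs : ∑ α : Fin d × Fin d, ∑ β : Fin d × Fin d, (Δ α β * (starRingEnd ℂ) (Q α β)).re
      ≤ Real.sqrt (∑ α : Fin d × Fin d, ∑ β : Fin d × Fin d, Complex.normSq (Δ α β))
        * Real.sqrt (∑ α : Fin d × Fin d, ∑ β : Fin d × Fin d, Complex.normSq (Q α β)) := by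
    have e1 : ∑ α : Fin d × Fin d, ∑ β : Fin d × Fin d, (Δ α β * (starRingEnd ℂ) (Q α β)).re
        = ∑ p : (Fin d × Fin d) × (Fin d × Fin d), (Δ p.1 p.2 * (starRingEnd ℂ) (Q p.1 p.2)).re :=
      (Fintype.sum_prod_type' _).symm
    have e2 : ∑ α : Fin d × Fin d, ∑ β : Fin d × Fin d, Complex.normSq (Δ α β)
        = ∑ p : (Fin d × Fin d) × (Fin d × Fin d), ‖Δ p.1 p.2‖ ^ 2 := by
      simp only [Complex.sq_norm]; exact (Fintype.sum_prod_type' _).symm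
    have e3 : ∑ α : Fin d × Fin d, ∑ β : Fin d × Fin d, Complex.normSq (Q α β)
        = ∑ p : (Fin d × Fin d) × (Fin d × Fin d), ‖Q p.1 p.2‖ ^ 2 := by
      simp only [Complex.sq_norm]; exact (Fintype.sum_prod_type' _).symm
    rw [e1, e2, e3]
    calc ∑ p : (Fin d × Fin d) × (Fin d × Fin d), (Δ p.1 p.2 * (starRingEnd ℂ) (Q p.1 p.2)).re
        ≤ ∑ p : (Fin d × Fin d) × (Fin d × Fin d), ‖Δ p.1 p.2‖ * ‖Q p.1 p.2‖ := by
          refine Finset.sum_le_sum fun p _ => ?_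
          calc (Δ p.1 p.2 * (starRingEnd ℂ) (Q p.1 p.2)).re
              ≤ ‖Δ p.1 p.2 * (starRingEnd ℂ) (Q p.1 p.2)‖ := Complex.re_le_norm _
            _ = ‖Δ p.1 p.2‖ * ‖Q p.1 p.2‖ := by
                rw [norm_mul, Complex.norm_conj]
      _ ≤ _ := Real.sum_mul_le_sqrt_mul_sqrt _ _ _
  -- combine
  have hfin : (star φ ⬝ᵥ ρ.mulVec φ).re - c ≤ Real.sqrt (t - c) * Real.sqrt (1 - c) := by
    rw [← hre]
    refine le_trans hcs ?_
    rw [hQsum]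
    exact mul_le_mul_of_nonneg_right (Real.sqrt_le_sqrt hΔsum) (Real.sqrt_nonneg _)
  linarith

set_option maxHeartbeats 2000000 in
theorem stmt_16 {d : ℕ} (hd : 0 < d) (t : ℝ)
    (ht1 : 1 / ((d : ℝ) ^ 2) ≤ t) (ht2 : t ≤ 1)
    (φ : Fin d × Fin d → ℂ)
    (hφ : φ = fun x : Fin d × Fin d => if x.1 = x.2 then ((1 / Real.sqrt d : ℝ) : ℂ) else 0)
    (lam : ℝ) (hlam : lam = Real.sqrt ((t * (d : ℝ) ^ 2 - 1) / ((d : ℝ) ^ 2 - 1)))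
    (ρstar : Matrix (Fin d × Fin d) (Fin d × Fin d) ℂ)
    (hρstar : ρstar = ((1 - lam : ℝ) : ℂ) • ((1 / ((d : ℝ) ^ 2) : ℝ) : ℂ) • (1 : Matrix (Fin d × Fin d) (Fin d × Fin d) ℂ)
        + ((lam : ℝ) : ℂ) • Matrix.vecMulVec φ (star φ)) :
    IsGreatest {x : ℝ | ∃ ρ : Matrix (Fin d × Fin d) (Fin d × Fin d) ℂ,
        ρ.PosSemidef ∧ ρ.trace = 1 ∧ ((ρ * ρ).trace.re ≤ t) ∧
        x = (star φ ⬝ᵥ ρ.mulVec φ).re}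
      ((1 / ((d : ℝ) ^ 2)) * (1 + Real.sqrt ((t * (d : ℝ) ^ 2 - 1) * ((d : ℝ) ^ 2 - 1)))) ∧
    (star φ ⬝ᵥ ρstar.mulVec φ).re =
      (1 / ((d : ℝ) ^ 2)) * (1 + Real.sqrt ((t * (d : ℝ) ^ 2 - 1) * ((d : ℝ) ^ 2 - 1))) := by
  have hD0 : (0:ℝ) < (d:ℝ)^2 := by positivity
  have hD1 : (1:ℝ) ≤ (d:ℝ)^2 := by
    have : (1:ℝ) ≤ (d:ℝ) := by exact_mod_cast hd
    nlinarith
  have htD : 0 ≤ t * (d:ℝ)^2 - 1 := by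
    rw [div_le_iff₀ hD0] at ht1; linarith
  have hq01 : 0 ≤ (t * (d:ℝ)^2 - 1) / ((d:ℝ)^2 - 1) := by
    apply div_nonneg htD; linarith
  have hlam0 : 0 ≤ lam := hlam ▸ Real.sqrt_nonneg _
  have hq1 : (t * (d:ℝ)^2 - 1) / ((d:ℝ)^2 - 1) ≤ 1 := by
    rcases eq_or_lt_of_le hD1 with h | h
    · rw [← h]; norm_num
    · rw [div_le_one (by linarith)]; nlinarith
  have hlam1 : lam ≤ 1 := by rw [hlam]; exact Real.sqrt_le_one.mpr hq1
  -- φ facts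
  have hn : ∑ α : Fin d × Fin d, Complex.normSq (φ α) = 1 := by rw [hφ]; exact phi_normSq hd
  have hip : ∑ α : Fin d × Fin d, (starRingEnd ℂ) (φ α) * φ α = 1 := by
    have h0 : ∀ α : Fin d × Fin d, (starRingEnd ℂ) (φ α) * φ α = ((Complex.normSq (φ α) : ℝ) : ℂ) := by
      intro α; rw [mul_comm, Complex.mul_conj]
    simp only [h0, ← Complex.ofReal_sum, hn, Complex.ofReal_one]
  have hipS : ∑ α : Fin d × Fin d, star (φ α) * φ α = 1 := by
    simpa only [Complex.star_def] using hip
  have hipd : star φ ⬝ᵥ φ = 1 := by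
    simpa only [dotProduct, Pi.star_apply] using hipS
  set P := Matrix.vecMulVec φ (star φ) with hP
  have hPmv : ∀ x : Fin d × Fin d → ℂ, P.mulVec x = (star φ ⬝ᵥ x) • φ := by
    intro x; funext i
    simp only [hP, mulVec, dotProduct, vecMulVec_apply, Pi.smul_apply, Pi.star_apply,
      smul_eq_mul]
    rw [Finset.sum_mul]
    exact Finset.sum_congr rfl fun j _ => by ring
  have hPtr : P.trace = 1 := by
    simp only [hP, Matrix.trace, Matrix.diag, vecMulVec_apply, Pi.star_apply]
    calc ∑ α : Fin d × Fin d, φ α * star (φ α)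
        = ∑ α : Fin d × Fin d, ((Complex.normSq (φ α) : ℝ) : ℂ) :=
          Finset.sum_congr rfl fun α _ => by rw [Complex.star_def, Complex.mul_conj]
      _ = 1 := by rw [← Complex.ofReal_sum, hn, Complex.ofReal_one]
  have hcardC : ((Fintype.card (Fin d × Fin d)) : ℂ) = (((d:ℝ)^2 : ℝ) : ℂ) := by
    rw [Fintype.card_prod, Fintype.card_fin]; push_cast; ring
  have hcD : ((1/((d:ℝ)^2) : ℝ) : ℂ) * (((d:ℝ)^2 : ℝ) : ℂ) = 1 := by
    rw [← Complex.ofReal_mul, one_div, inv_mul_cancel₀ (ne_of_gt hD0), Complex.ofReal_one]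
  -- value at ρstar
  have hFval : (star φ ⬝ᵥ ρstar.mulVec φ) = (((1-lam) * (1/((d:ℝ)^2)) + lam : ℝ) : ℂ) := by
    rw [hρstar, add_mulVec, smul_mulVec, smul_mulVec, smul_mulVec,
      one_mulVec, hPmv φ, hipd, one_smul, dotProduct_add, dotProduct_smul, dotProduct_smul,
      dotProduct_smul, hipd]
    push_cast
    simp only [smul_eq_mul]
    ring
  -- the sqrt algebra
  have hval : (1-lam) * (1/((d:ℝ)^2)) + lam
      = (1 / ((d:ℝ)^2)) * (1 + Real.sqrt ((t * (d:ℝ)^2 - 1) * ((d:ℝ)^2 - 1))) := by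
    rcases eq_or_lt_of_le hD1 with hdd | hdd
    · rw [← hdd, show (t * (1:ℝ) - 1) * ((1:ℝ) - 1) = 0 by ring, Real.sqrt_zero]; ring
    · have e : lam * ((d:ℝ)^2 - 1) = Real.sqrt ((t * (d:ℝ)^2 - 1) * ((d:ℝ)^2 - 1)) := by
        have h9 : (t * (d:ℝ)^2 - 1) * ((d:ℝ)^2 - 1)
            = ((t * (d:ℝ)^2 - 1)/((d:ℝ)^2 - 1)) * ((d:ℝ)^2 - 1)^2 := by
          have hne : ((d:ℝ)^2 - 1) ≠ 0 := by linarith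
          field_simp
        rw [h9, Real.sqrt_mul hq01, Real.sqrt_sq (by linarith : (0:ℝ) ≤ (d:ℝ)^2 - 1), hlam]
      rw [← e]
      field_simp
      ring
  have hvalre : (star φ ⬝ᵥ ρstar.mulVec φ).re
      = (1 / ((d:ℝ)^2)) * (1 + Real.sqrt ((t * (d:ℝ)^2 - 1) * ((d:ℝ)^2 - 1))) := by
    rw [hFval, Complex.ofReal_re, hval]
  -- Hermitian
  have hPh : Pᴴ = P := by
    ext i j
    simp [hP, conjTranspose_apply, vecMulVec_apply, star_mul', star_star, mul_comm]
  have hherm : ρstar.IsHermitian := by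
    show ρstarᴴ = ρstar
    rw [hρstar, conjTranspose_add, conjTranspose_smul, conjTranspose_smul, conjTranspose_smul,
      conjTranspose_one, hPh]
    simp only [Complex.star_def, Complex.conj_ofReal]
  -- PSD
  have hpsdstar : ρstar.PosSemidef := by
    refine PosSemidef.of_dotProduct_mulVec_nonneg hherm fun x => ?_
    rw [hρstar, add_mulVec, smul_mulVec, smul_mulVec, smul_mulVec,
      one_mulVec, hPmv x, dotProduct_add, dotProduct_smul, dotProduct_smul, dotProduct_smul,
      dotProduct_smul]
    have h1 : star x ⬝ᵥ φ = star (star φ ⬝ᵥ x) := by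
      rw [Matrix.star_dotProduct]
    simp only [smul_eq_mul, h1]
    apply add_nonneg
    · apply mul_nonneg
      · exact Complex.zero_le_real.mpr (by linarith)
      · apply mul_nonneg
        · exact Complex.zero_le_real.mpr (by positivity)
        · exact dotProduct_star_self_nonneg x
    · apply mul_nonneg
      · exact Complex.zero_le_real.mpr hlam0
      · exact mul_star_self_nonneg _
  -- trace of ρstar
  have htrρ : ρstar.trace = 1 := by
    rw [hρstar, trace_add, trace_smul, trace_smul, trace_smul, trace_one, hPtr, hcardC]
    simp only [smul_eq_mul, hcD]
    push_cast
    ring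
  -- purity
  have hP2 : P * P = P := by
    ext α β
    rw [Matrix.mul_apply]
    simp only [hP, vecMulVec_apply, Pi.star_apply]
    calc ∑ γ : Fin d × Fin d, (φ α * star (φ γ)) * (φ γ * star (φ β))
        = ∑ γ : Fin d × Fin d, (star (φ γ) * φ γ) * (φ α * star (φ β)) :=
          Finset.sum_congr rfl fun γ _ => by ring
      _ = φ α * star (φ β) := by rw [← Finset.sum_mul, hipS, one_mul]
  have hρ' : ρstar = (((1-lam) * (1/((d:ℝ)^2)) : ℝ) : ℂ) • (1 : Matrix (Fin d × Fin d) (Fin d × Fin d) ℂ)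
      + ((lam : ℝ) : ℂ) • P := by
    rw [hρstar, smul_smul, ← Complex.ofReal_mul]
  have hpure : (ρstar * ρstar).trace.re ≤ t := by
    set A : ℝ := (1-lam) * (1/((d:ℝ)^2)) with hA
    have hsq : ρstar * ρstar = ((A*A : ℝ) : ℂ) • (1 : Matrix (Fin d × Fin d) (Fin d × Fin d) ℂ)
        + ((A*lam + lam*A + lam*lam : ℝ) : ℂ) • P := by
      rw [hρ']
      push_cast
      simp only [mul_add, add_mul, Matrix.smul_mul, Matrix.mul_smul, one_mul, mul_one, hP2,
        smul_smul, add_smul]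
      abel
    have htr2 : (ρstar * ρstar).trace = (((A*A) * ((d:ℝ)^2) + (A*lam + lam*A + lam*lam) : ℝ) : ℂ) := by
      rw [hsq, trace_add, trace_smul, trace_smul, trace_one, hPtr, hcardC]
      simp only [smul_eq_mul, mul_one]
      push_cast
      ring
    rw [htr2, Complex.ofReal_re]
    rcases eq_or_lt_of_le hD1 with hdd | hdd
    · have ht1' : (1:ℝ) ≤ t := by rw [← hdd] at ht1; simpa using ht1
      have hteq : t = 1 := le_antisymm ht2 ht1'
      rw [hA, ← hdd, hteq]
      nlinarith
    · have hlam2 : lam^2 = (t * (d:ℝ)^2 - 1)/((d:ℝ)^2 - 1) := by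
        rw [hlam]; exact Real.sq_sqrt hq01
      have hW : A*A*((d:ℝ)^2) + (A*lam + lam*A + lam*lam)
          = (1 - lam^2)*(1/((d:ℝ)^2)) + lam^2 := by
        rw [hA]; field_simp; ring
      rw [hW, hlam2]
      have hfin : (1 - (t * (d:ℝ)^2 - 1)/((d:ℝ)^2 - 1))*(1/((d:ℝ)^2))
          + (t * (d:ℝ)^2 - 1)/((d:ℝ)^2 - 1) = t := by
        have hne : ((d:ℝ)^2 - 1) ≠ 0 := by linarith
        field_simp
        ring
      rw [hfin]
  constructor
  · constructor
    · exact ⟨ρstar, hpsdstar, htrρ, hpure, hvalre.symm⟩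
    · rintro x ⟨ρ, hpsd, htr, hpur, rfl⟩
      have h := ub hd t φ hn ρ hpsd htr hpur
      have h2 := sqrtAlg hd t ht1
      rw [h2] at h
      calc (star φ ⬝ᵥ ρ.mulVec φ).re
          ≤ 1/((d:ℝ)^2) + (1/((d:ℝ)^2)) * Real.sqrt ((t*(d:ℝ)^2-1)*((d:ℝ)^2-1)) := h
        _ = _ := by ring
  · exact hvalre
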